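/- arXiv:1107.6028 — 2 statements merged into one kernel-verified Lean document; each statement's English description precedes it below -/
import Mathlib

section
/- Let Σ be a closed orientable surface and Γ ⊂ Σ a 1-submanifold such that Σ \ Γ has exactly two connected components. Let c ⊂ Σ \ Γ be a simple closed curve that does not separate Σ. Then c is nonisolating: every connected component of Σ \ (Γ ∪ c) has a boundary component intersecting Γ. -/
/-- Nonisolating curves: let `Σ` be a closed orientable surface (a compact topological
2-manifold), `Γ ⊂ Σ` a closed 1-submanifold whose complement has exactly two connected
components, and `c ⊂ Σ \ Γ` a simple closed curve (a connected closed subset) which does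
not separate `Σ` (its complement is connected). Then `c` is nonisolating: every connected
component of `Σ \ (Γ ∪ c)` has closure meeting `Γ`. -/
theorem nonseparating_curve_is_nonisolating
    {S : Type*} [TopologicalSpace S] [CompactSpace S] [T2Space S] [ConnectedSpace S]
    [ChartedSpace (EuclideanSpace ℝ (Fin 2)) S]
    (Γ c : Set S) (hΓc : IsClosed Γ) (hcc : IsClosed c)
    (hΓne : Γ.Nonempty)
    (hcΓ : c ⊆ Γᶜ) (hconn : IsConnected c)
    (htwo : Nat.card (ConnectedComponents ↥(Γᶜ)) = 2)
    (hnonsep : IsConnected (cᶜ : Set S)) :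
    ∀ x ∈ (Γ ∪ c)ᶜ, (closure (connectedComponentIn (Γ ∪ c)ᶜ x) ∩ Γ).Nonempty := by
  have : LocallyConnectedSpace S := ChartedSpace.locallyConnectedSpace
    (EuclideanSpace ℝ (Fin 2)) S
  intro x hx
  set W : Set S := (Γ ∪ c)ᶜ with hW
  have hWopen : IsOpen W := (hΓc.union hcc).isOpen_compl
  set U : Set S := connectedComponentIn W x with hU
  have hUopen : IsOpen U := hWopen.connectedComponentIn
  have hxU : x ∈ U := mem_connectedComponentIn hx
  have hUW : U ⊆ W := connectedComponentIn_subset W x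
  -- closure U ∩ W ⊆ U
  have hclW : closure U ∩ W ⊆ U := by
    rintro y ⟨hy, hyW⟩
    have h1 : connectedComponentIn W y ∈ nhds y :=
      connectedComponentIn_mem_nhds (hWopen.mem_nhds hyW)
    obtain ⟨z, hzC, hzU⟩ := mem_closure_iff_nhds.mp hy _ h1
    have h2 : connectedComponentIn W y = connectedComponentIn W z :=
      connectedComponentIn_eq hzC
    have h3 : U = connectedComponentIn W z := connectedComponentIn_eq hzU
    have : y ∈ connectedComponentIn W y := mem_connectedComponentIn hyW
    rw [h2, ← h3] at this
    exact this
  by_contra hcon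
  rw [Set.not_nonempty_iff_eq_empty] at hcon
  have hclΓ : closure U ⊆ Γᶜ := by
    intro y hy
    intro hyΓ
    exact Set.eq_empty_iff_forall_notMem.mp hcon y ⟨hy, hyΓ⟩
  -- hence closure U ∩ cᶜ ⊆ U
  have hclc : closure U ∩ cᶜ ⊆ U := by
    rintro y ⟨hy, hyc⟩
    exact hclW ⟨hy, by simp [hW, Set.mem_compl_iff, Set.mem_union, hclΓ hy, hyc]⟩
  -- cᶜ is preconnected, covered by open sets U and (closure U)ᶜ
  have hcover : (cᶜ : Set S) ⊆ U ∪ (closure U)ᶜ := by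
    intro y hy
    by_cases h : y ∈ closure U
    · exact Or.inl (hclc ⟨h, hy⟩)
    · exact Or.inr h
  have hxc : x ∈ (cᶜ : Set S) := fun hxc => hx (Or.inr hxc)
  have hΓc' : Γ ⊆ (cᶜ : Set S) := fun y hy hyc => hcΓ hyc hy
  obtain ⟨g, hg⟩ := hΓne
  have hne2 : ((cᶜ : Set S) ∩ (closure U)ᶜ).Nonempty := by
    refine ⟨g, hΓc' hg, fun hgcl => ?_⟩
    exact hclΓ hgcl hg
  have hne1 : ((cᶜ : Set S) ∩ U).Nonempty := ⟨x, hxc, hxU⟩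
  obtain ⟨y, _, hyU, hyncl⟩ := hnonsep.isPreconnected U (closure U)ᶜ hUopen
    isClosed_closure.isOpen_compl hcover hne1 hne2
  exact hyncl (subset_closure hyU)
end

section
/- Abstract version of Lemma 5.2: let (V, s_f)_{f ∈ ℤ} be a family of modules V_f with maps s_f : V → V_f, such that for each f there are exact triangles V →^{s_f} V_f →^{F₂} V_{f+1} →^{F₃} V and V →^{s_{f+1}} V_{f+1} → V_{f+2} →^{G₃} V, with s_{f+1} ∘ F₃ = 0 and F₃ ∘ s_{f+1} = 0. Then: (1) if s_{f+1} is injective or surjective, s_f is injective; (2) if s_f is surjective or zero, s_{f+1} is zero. -/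
/-- Abstract version of Lemma 5.2 (surgery maps). Given a family of modules `W f`
(`f ∈ ℤ`) and maps `s f : V → W f` fitting for each `f` into an exact triangle
`V → W f → W (f+1) → V` (with maps `F₂ f` and `F₃ f`), such that
`s (f+1) ∘ F₃ f = 0` and `F₃ f ∘ s (f+1) = 0`, then:
(1) if `s (f+1)` is injective or surjective, then `s f` is injective;
(2) if `s f` is surjective or zero, then `s (f+1) = 0`. -/
theorem surgery_maps_lemma
    {R : Type*} [CommRing R]
    {V : Type*} [AddCommGroup V] [Module R V]
    {W : ℤ → Type*} [∀ f, AddCommGroup (W f)] [∀ f, Module R (W f)]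
    (s : ∀ f : ℤ, V →ₗ[R] W f)
    (F₂ : ∀ f : ℤ, W f →ₗ[R] W (f + 1))
    (F₃ : ∀ f : ℤ, W (f + 1) →ₗ[R] V)
    (hex₁ : ∀ f, LinearMap.range (s f) = LinearMap.ker (F₂ f))
    (hex₂ : ∀ f, LinearMap.range (F₂ f) = LinearMap.ker (F₃ f))
    (hex₃ : ∀ f, LinearMap.range (F₃ f) = LinearMap.ker (s f))
    (hcomp₁ : ∀ f, (s (f + 1)) ∘ₗ (F₃ f) = 0)
    (hcomp₂ : ∀ f, (F₃ f) ∘ₗ (s (f + 1)) = 0)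
    (f : ℤ) :
    ((Function.Injective (s (f + 1)) ∨ Function.Surjective (s (f + 1))) →
      Function.Injective (s f)) ∧
    ((Function.Surjective (s f) ∨ s f = 0) → s (f + 1) = 0) := by
  constructor
  · rintro (hinj | hsurj)
    · -- s (f+1) injective ⇒ F₃ f = 0 ⇒ ker (s f) = ⊥
      have hF₃ : F₃ f = 0 := by
        ext x
        apply hinj
        have := congrFun (congrArg DFunLike.coe (hcomp₁ f)) x
        simpa using this
      rw [← LinearMap.ker_eq_bot, ← hex₃ f, hF₃, LinearMap.range_zero]
    · -- s (f+1) surjective ⇒ F₃ f = 0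
      have hF₃ : F₃ f = 0 := by
        ext x
        obtain ⟨y, rfl⟩ := hsurj x
        have := congrFun (congrArg DFunLike.coe (hcomp₂ f)) y
        simpa using this
      rw [← LinearMap.ker_eq_bot, ← hex₃ f, hF₃, LinearMap.range_zero]
  · rintro (hsurj | hzero)
    · -- s f surjective ⇒ F₂ f = 0 ⇒ F₃ f injective ⇒ s (f+1) = 0
      have hF₂ : F₂ f = 0 := by
        ext x
        obtain ⟨y, rfl⟩ := hsurj x
        have : s f y ∈ LinearMap.ker (F₂ f) := by
          rw [← hex₁ f]; exact ⟨y, rfl⟩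
        simpa using this
      have hinj : Function.Injective (F₃ f) := by
        rw [← LinearMap.ker_eq_bot, ← hex₂ f, hF₂, LinearMap.range_zero]
      ext x
      apply hinj
      have := congrFun (congrArg DFunLike.coe (hcomp₂ f)) x
      simpa using this
    · -- s f = 0 ⇒ F₃ f surjective ⇒ s (f+1) = 0
      have hsurj : Function.Surjective (F₃ f) := by
        rw [← LinearMap.range_eq_top, hex₃ f, hzero, LinearMap.ker_zero]
      ext x
      obtain ⟨y, rfl⟩ := hsurj x
      have := congrFun (congrArg DFunLike.coe (hcomp₁ f)) y
      simpa using this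
end
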